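/- Let p be a prime, k a perfect field of characteristic p, n ≥ 1 and m ≥ 1 integers, and let Σ denote either Σ_s (with p odd and 1 ≤ s ≤ (p−1)/2) or Σ_{1,t} (with t ≥ 1), formed inside M_n(W(k)). Let Φ : W(k)^n → W(k)^n be an additive map with Φ(a·x) = σ(a)·Φ(x) for all a ∈ W(k), and Θ : W(k)^n → W(k)^n an additive map with Θ(σ(a)·x) = a·Θ(x) for all a ∈ W(k), such that Φ∘Θ = Θ∘Φ = p·id. Let X ∈ Σ, regarded as a W(k)-linear endomorphism of W(k)^n, and assume that X∘Φ − Φ∘X and X∘Θ − Θ∘X take all their values in p^m·W(k)^n. Then e₁(X)∘Φ − Φ∘e₁(X), e₁(X)∘Θ − Θ∘e₁(X), l₁(X)∘Φ − Φ∘l₁(X), and l₁(X)∘Θ − Θ∘l₁(X) all take their values in p^m·W(k)^n, where e₁(X), l₁(X) ∈ Σ are the V-adic limits of the exponential and logarithmic partial sums of X. -/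

import Mathlib

/-- The matrix of `j`-th Witt coordinates of a matrix of Witt vectors. -/
def wittPi (p : ℕ) {A : Type*} {n : ℕ} (j : ℕ)
    (X : Matrix (Fin n) (Fin n) (WittVector p A)) : Matrix (Fin n) (Fin n) A :=
  X.map fun w => w.coeff j

/-- `Σ_s`: matrices of Witt vectors whose `0`-th Witt coordinate matrix is `s`-step nilpotent. -/
def SigmaS (p : ℕ) {A : Type*} [CommRing A] {n : ℕ} (s : ℕ) :
    Set (Matrix (Fin n) (Fin n) (WittVector p A)) :=
  {X | wittPi p 0 X ^ s = 0}

/-- `Σ_{1,t}`: matrices of Witt vectors whose `0`-th Witt coordinate matrix vanishes and whose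
`1`-st Witt coordinate matrix is `t`-step nilpotent. -/
def SigmaOneT (p : ℕ) {A : Type*} [CommRing A] {n : ℕ} (t : ℕ) :
    Set (Matrix (Fin n) (Fin n) (WittVector p A)) :=
  {X | wittPi p 0 X = 0 ∧ wittPi p 1 X ^ t = 0}

/-- The predicate "`S` is either `Σ_s` (with `p` odd and `1 ≤ s ≤ (p-1)/2`) or `Σ_{1,t}`
(with `t ≥ 1`)". -/
def IsSigmaEither (p : ℕ) {A : Type*} [CommRing A] {n : ℕ}
    (S : Set (Matrix (Fin n) (Fin n) (WittVector p A))) : Prop :=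
  (∃ s : ℕ, Odd p ∧ 1 ≤ s ∧ s ≤ (p - 1) / 2 ∧ S = SigmaS p s) ∨
  (∃ t : ℕ, 1 ≤ t ∧ S = SigmaOneT p t)

/-- A matrix of Witt vectors lies entrywise in `V^d` if the `j`-th Witt coordinates of all its
entries vanish for all `j < d`. -/
def EntrywiseV (p : ℕ) {A : Type*} [Zero A] {n : ℕ} (d : ℕ)
    (X : Matrix (Fin n) (Fin n) (WittVector p A)) : Prop :=
  ∀ j < d, wittPi p j X = 0

/-- V-adic convergence of a sequence of matrices of Witt vectors. -/
def TendstoV (p : ℕ) [Fact p.Prime] {A : Type*} [CommRing A] {n : ℕ}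
    (Y : ℕ → Matrix (Fin n) (Fin n) (WittVector p A))
    (L : Matrix (Fin n) (Fin n) (WittVector p A)) : Prop :=
  ∀ d : ℕ, ∃ N₀ : ℕ, ∀ N ≥ N₀, EntrywiseV p d (Y N - L)

/-- `E` is the sequence of exponential partial sums of `X`:
`N! • E N = ∑_{v=1}^{N} (N!/v!) • X^v` for all `N ≥ 1`. -/
def IsExpPartialSums (p : ℕ) [Fact p.Prime] {A : Type*} [CommRing A] {n : ℕ}
    (X : Matrix (Fin n) (Fin n) (WittVector p A))
    (E : ℕ → Matrix (Fin n) (Fin n) (WittVector p A)) : Prop :=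
  ∀ N, 1 ≤ N → N.factorial • E N =
    ∑ v ∈ Finset.Icc 1 N, (N.factorial / v.factorial) • X ^ v

/-- `Lg` is the sequence of logarithmic partial sums of `X`:
`N! • Lg N = ∑_{v=1}^{N} (-1)^(v-1) • (N!/v) • X^v` for all `N ≥ 1`. -/
def IsLogPartialSums (p : ℕ) [Fact p.Prime] {A : Type*} [CommRing A] {n : ℕ}
    (X : Matrix (Fin n) (Fin n) (WittVector p A))
    (Lg : ℕ → Matrix (Fin n) (Fin n) (WittVector p A)) : Prop :=
  ∀ N, 1 ≤ N → (N.factorial : ℤ) • Lg N =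
    ∑ v ∈ Finset.Icc 1 N, ((-1 : ℤ) ^ (v - 1) * ((N.factorial / v : ℕ) : ℤ)) • X ^ v

/-- `L` is the V-adic limit of the exponential partial sums of `X`. -/
def IsExpLimit (p : ℕ) [Fact p.Prime] {A : Type*} [CommRing A] {n : ℕ}
    (X L : Matrix (Fin n) (Fin n) (WittVector p A)) : Prop :=
  ∃ E : ℕ → Matrix (Fin n) (Fin n) (WittVector p A),
    IsExpPartialSums p X E ∧ TendstoV p E L

/-- `L` is the V-adic limit of the logarithmic partial sums of `X`. -/
def IsLogLimit (p : ℕ) [Fact p.Prime] {A : Type*} [CommRing A] {n : ℕ}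
    (X L : Matrix (Fin n) (Fin n) (WittVector p A)) : Prop :=
  ∃ Lg : ℕ → Matrix (Fin n) (Fin n) (WittVector p A),
    IsLogPartialSums p X Lg ∧ TendstoV p Lg L

section Aux

open WittVector

variable {p : ℕ} [hp : Fact p.Prime] {k : Type*} [Field k] [CharP k p] [PerfectRing k p]

local notation "W" => WittVector p k

lemma wv_pow_dvd_of_coeff_eq_zero :
    ∀ (d : ℕ) (w : W), (∀ j, j < d → w.coeff j = 0) → (p : W) ^ d ∣ w := by
  intro d
  induction d with
  | zero => intro w _; simpa using one_dvd w
  | succ d ih =>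
    intro w h
    set u : W := WittVector.mk p (fun j => w.coeff (j + 1)) with hu
    have hwu : w = WittVector.verschiebung u := by
      apply WittVector.ext
      intro j
      cases j with
      | zero => rw [WittVector.verschiebung_coeff_zero]; exact h 0 (Nat.succ_pos d)
      | succ j => rw [WittVector.verschiebung_coeff_succ, hu, WittVector.coeff_mk]
    obtain ⟨z, hz⟩ := ih u (fun j hj => by rw [hu, WittVector.coeff_mk]; exact h (j + 1) (by omega))
    refine ⟨(frobeniusEquiv p k).symm z, ?_⟩
    have h1 : u = WittVector.frobenius ((frobeniusEquiv p k).symm u) := by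
      rw [← WittVector.frobeniusEquiv_apply]; exact ((frobeniusEquiv p k).apply_symm_apply u).symm
    have h2 : (frobeniusEquiv p k).symm u = (p : W) ^ d * (frobeniusEquiv p k).symm z := by
      rw [hz, map_mul, map_pow, map_natCast]
    calc w = WittVector.verschiebung (WittVector.frobenius ((frobeniusEquiv p k).symm u)) := by
            rw [← h1, hwu]
      _ = ((frobeniusEquiv p k).symm u) * p := WittVector.verschiebung_frobenius _
      _ = (p : W) ^ (d + 1) * (frobeniusEquiv p k).symm z := by rw [h2]; ring

lemma wv_prime : Prime (p : W) := by
  haveI : IsDiscreteValuationRing (WittVector p k) := WittVector.isDiscreteValuationRing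
  exact (UniqueFactorizationMonoid.irreducible_iff_prime).mp (WittVector.irreducible p)

lemma wv_not_dvd_cast {b : ℕ} (hb : ¬ p ∣ b) : ¬ (p : W) ∣ (b : W) := by
  rintro ⟨t, ht⟩
  have h0 : (b : k) = 0 := by
    have h1 := congrArg WittVector.constantCoeff ht
    rw [map_mul, map_natCast, map_natCast] at h1
    rw [h1, CharP.cast_eq_zero k p, zero_mul]
  exact hb ((CharP.cast_eq_zero_iff k p b).mp h0)

lemma wv_cancel_factorial (m : ℕ) (N : ℕ) (c : W)
    (h : (p : W) ^ (m + padicValNat p N.factorial) ∣ (N.factorial : W) * c) :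
    (p : W) ^ m ∣ c := by
  set a := padicValNat p N.factorial with ha
  set b := N.factorial / p ^ a with hb
  have hfac : p ^ a * b = N.factorial := by
    have := Nat.ordProj_mul_ordCompl_eq_self N.factorial p
    rwa [Nat.factorization_def _ hp.out] at this
  have hbd : ¬ p ∣ b := by
    have := Nat.not_dvd_ordCompl hp.out (Nat.factorial_ne_zero N)
    rwa [Nat.factorization_def _ hp.out] at this
  obtain ⟨w, hw⟩ := h
  have hcast : ((N.factorial : ℕ) : W) = (p : W) ^ a * (b : W) := by
    rw [← hfac]; push_cast; ring
  have h3 : (p : W) ^ a * ((b : W) * c) = (p : W) ^ a * ((p : W) ^ m * w) := by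
    rw [← mul_assoc, ← hcast, hw, pow_add]; ring
  have h4 : (b : W) * c = (p : W) ^ m * w :=
    mul_left_cancel₀ (pow_ne_zero _ (WittVector.p_nonzero p k)) h3
  exact (wv_prime).pow_dvd_of_dvd_mul_left m (wv_not_dvd_cast hbd) ⟨w, h4⟩

end Aux

lemma ofDigits_zero_list (p : ℕ) : ∀ (l : List ℕ), (∀ x ∈ l, x = 0) → Nat.ofDigits p l = 0 := by
  intro l
  induction l with
  | nil => intro _; simp [Nat.ofDigits]
  | cons a t ih =>
    intro h
    rw [Nat.ofDigits_cons, h a List.mem_cons_self, ih (fun x hx => h x (List.mem_cons_of_mem a hx))]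
    simp

lemma digits_sum_pos (p : ℕ) {v : ℕ} (hv : 1 ≤ v) : 1 ≤ (p.digits v).sum := by
  by_contra hcon
  push_neg at hcon
  have hsum : (p.digits v).sum = 0 := by omega
  have hall : ∀ x ∈ p.digits v, x = 0 := List.sum_eq_zero_iff.mp hsum
  have := Nat.ofDigits_digits p v
  rw [ofDigits_zero_list p _ hall] at this
  omega

lemma legendre_bound (p : ℕ) [hp : Fact p.Prime] {v : ℕ} (hv : 1 ≤ v) :
    (p - 1) * padicValNat p v.factorial ≤ v - 1 := by
  have h := sub_one_mul_padicValNat_factorial (p := p) v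
  have := digits_sum_pos p hv
  omega

lemma harith_sigma_s (p : ℕ) [hp : Fact p.Prime] {s : ℕ} (hs : 1 ≤ s) (h2s : 2 * s ≤ p - 1) :
    ∀ v, 1 ≤ v → padicValNat p v.factorial ≤ v / s - 1 := by
  intro v hv
  set a := padicValNat p v.factorial with ha
  rcases Nat.eq_zero_or_pos a with h0 | hpos
  · omega
  have hleg : (p - 1) * a ≤ v - 1 := legendre_bound p hv
  have h2 : s * (a + 1) ≤ v := by
    calc s * (a + 1) = s * a + s := by ring
      _ ≤ s * a + s * a := by
          have : s ≤ s * a := Nat.le_mul_of_pos_right s hpos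
          omega
      _ = (2 * s) * a := by ring
      _ ≤ (p - 1) * a := Nat.mul_le_mul_right a h2s
      _ ≤ v - 1 := hleg
      _ ≤ v := by omega
  have h3 : a + 1 ≤ v / s := (Nat.le_div_iff_mul_le (by omega)).mpr (by rw [mul_comm]; exact h2)
  omega

lemma harith_one (p : ℕ) [hp : Fact p.Prime] :
    ∀ v, 1 ≤ v → padicValNat p v.factorial ≤ v / 1 - 1 := by
  intro v hv
  set a := padicValNat p v.factorial with ha
  rcases Nat.eq_zero_or_pos a with h0 | hpos
  · omega
  have hleg : (p - 1) * a ≤ v - 1 := legendre_bound p hv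
  have hp2 : 2 ≤ p := hp.out.two_le
  have h4 : a ≤ (p - 1) * a := Nat.le_mul_of_pos_left a (by omega)
  rw [Nat.div_one]
  omega

lemma padicValNat_self_le_factorial (p : ℕ) [hp : Fact p.Prime] {v : ℕ} (hv : 1 ≤ v) :
    padicValNat p v ≤ padicValNat p v.factorial := by
  have hfac : v * (v - 1).factorial = v.factorial := Nat.mul_factorial_pred (by omega)
  have : padicValNat p v.factorial = padicValNat p v + padicValNat p (v - 1).factorial := by
    rw [← hfac]
    exact padicValNat.mul (by omega) (Nat.factorial_ne_zero _)
  omega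

section Key

variable (p : ℕ) [hp : Fact p.Prime] (k : Type*) [Field k] [CharP k p] [PerfectRing k p]

lemma key_commute {n : ℕ} (m s : ℕ) (hs : 1 ≤ s)
    (X : Matrix (Fin n) (Fin n) (WittVector p k))
    (hXs : ∀ i j, (p : WittVector p k) ∣ (X ^ s) i j)
    (harith : ∀ v, 1 ≤ v → padicValNat p v.factorial ≤ v / s - 1)
    (Ψ : (Fin n → WittVector p k) → Fin n → WittVector p k)
    (hadd : ∀ x y, Ψ (x + y) = Ψ x + Ψ y)
    (hps : ∀ (c : ℕ) (x), Ψ ((p : WittVector p k) ^ c • x) = (p : WittVector p k) ^ c • Ψ x)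
    (hcomm : ∀ x i, (p : WittVector p k) ^ m ∣ (X.mulVec (Ψ x) - Ψ (X.mulVec x)) i)
    (Y : Matrix (Fin n) (Fin n) (WittVector p k))
    (hY : IsExpLimit p X Y ∨ IsLogLimit p X Y) :
    ∀ x, ∃ y, Y.mulVec (Ψ x) - Ψ (Y.mulVec x) = ((p : WittVector p k) ^ m) • y := by
  classical
  let C : (Fin n → WittVector p k) → Matrix (Fin n) (Fin n) (WittVector p k) →+ (Fin n → WittVector p k) :=
    fun x => AddMonoidHom.mk' (fun A => A.mulVec (Ψ x) - Ψ (A.mulVec x)) (by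
      intro A B
      show (A + B).mulVec (Ψ x) - Ψ ((A + B).mulVec x) = _
      rw [Matrix.add_mulVec, Matrix.add_mulVec, hadd]
      abel)
  have hCapp : ∀ x A, C x A = A.mulVec (Ψ x) - Ψ (A.mulVec x) := fun x A => rfl
  have hmul : ∀ (A B : Matrix (Fin n) (Fin n) (WittVector p k)) x,
      C x (A * B) = A.mulVec (C x B) + C (B.mulVec x) A := by
    intro A B x
    simp only [hCapp]
    rw [← Matrix.mulVec_mulVec, ← Matrix.mulVec_mulVec, Matrix.mulVec_sub]
    abel
  have hdvd_mulVec : ∀ (q : WittVector p k) (A : Matrix (Fin n) (Fin n) (WittVector p k))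
      (y : Fin n → WittVector p k), (∀ j, q ∣ y j) → ∀ i, q ∣ A.mulVec y i := by
    intro q A y h i
    simp only [Matrix.mulVec, dotProduct]
    exact Finset.dvd_sum fun j _ => (h j).mul_left _
  have hdvd_mulVec' : ∀ (q : WittVector p k) (A : Matrix (Fin n) (Fin n) (WittVector p k)),
      (∀ i j, q ∣ A i j) → ∀ (y : Fin n → WittVector p k) (i), q ∣ A.mulVec y i := by
    intro q A hA y i
    simp only [Matrix.mulVec, dotProduct]
    exact Finset.dvd_sum fun j _ => (hA i j).mul_right _
  have hCsmul : ∀ (c : ℕ) (z : Fin n → WittVector p k) (A),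
      C ((p : WittVector p k) ^ c • z) A = (p : WittVector p k) ^ c • C z A := by
    intro c z A
    simp only [hCapp]
    rw [hps, Matrix.mulVec_smul, Matrix.mulVec_smul, hps, smul_sub]
  have hpull : ∀ (A : Matrix (Fin n) (Fin n) (WittVector p k)) (b : ℕ),
      (∀ w i, (p : WittVector p k) ^ b ∣ C w A i) →
      ∀ (c : ℕ) (x), (∀ j, (p : WittVector p k) ^ c ∣ x j) → ∀ i,
        (p : WittVector p k) ^ (b + c) ∣ C x A i := by
    intro A b hb c x hx i
    choose z hz using hx
    have hxz : x = (p : WittVector p k) ^ c • z :=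
      funext fun j => by rw [hz j, Pi.smul_apply, smul_eq_mul]
    rw [hxz, hCsmul]
    obtain ⟨t, ht⟩ := hb z i
    refine ⟨t, ?_⟩
    rw [Pi.smul_apply, smul_eq_mul, ht, pow_add]; ring
  have hbase : ∀ u, 1 ≤ u → ∀ x i, (p : WittVector p k) ^ m ∣ C x (X ^ u) i := by
    intro u
    induction u with
    | zero => intro h; exact absurd h (by omega)
    | succ u ih =>
      intro _ x i
      rcases Nat.eq_zero_or_pos u with h0 | hu
      · subst h0; rw [pow_one]; exact hcomm x i
      · have hdec : C x (X ^ (u + 1)) = X.mulVec (C x (X ^ u)) + C ((X ^ u).mulVec x) X := by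
          rw [pow_succ']
          exact hmul X (X ^ u) x
        rw [hdec, Pi.add_apply]
        refine dvd_add (hdvd_mulVec _ X _ (fun j => ih hu x j) i) ?_
        exact hcomm ((X ^ u).mulVec x) i
  have hXsk : ∀ (c : ℕ) i j, (p : WittVector p k) ^ c ∣ ((X ^ s) ^ c) i j := by
    intro c
    induction c with
    | zero => intro i j; simp
    | succ c ih =>
      intro i j
      rw [pow_succ (X ^ s) c, Matrix.mul_apply, pow_succ]
      exact Finset.dvd_sum fun l _ => mul_dvd_mul (ih i l) (hXs l j)
  have hpow : ∀ (u : ℕ) i j, (p : WittVector p k) ^ (u / s) ∣ (X ^ u) i j := by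
    intro u i j
    have hx : X ^ u = (X ^ s) ^ (u / s) * X ^ (u % s) := by
      rw [← pow_mul, ← pow_add, Nat.div_add_mod]
    rw [hx, Matrix.mul_apply]
    exact Finset.dvd_sum fun l _ => (hXsk (u / s) i l).mul_right _
  have hcore : ∀ v, 1 ≤ v → ∀ x i,
      (p : WittVector p k) ^ (m + (v / s - 1)) ∣ C x (X ^ v) i := by
    intro v
    induction v using Nat.strong_induction_on with
    | _ v ih =>
      intro hv x i
      by_cases hvs : v ≤ s
      · have h1 : v / s - 1 = 0 := by
          have h2 : v / s ≤ s / s := Nat.div_le_div_right hvs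
          rw [Nat.div_self (by omega)] at h2
          omega
        rw [h1]
        simpa using hbase v hv x i
      · push_neg at hvs
        have hsv : s ≤ v := le_of_lt hvs
        have hdiv : v / s = (v - s) / s + 1 := Nat.div_eq_sub_div (by omega) hsv
        have hxv : X ^ v = X ^ s * X ^ (v - s) := by rw [← pow_add, Nat.add_sub_cancel' hsv]
        rw [hxv, hmul, Pi.add_apply]
        apply dvd_add
        · have hterm : ∀ j, (p : WittVector p k) ^ (m + (v / s - 1)) ∣
              (X ^ s) i j * C x (X ^ (v - s)) j := by
            intro j
            have e1 : m + (v / s - 1) ≤ 1 + (m + ((v - s) / s - 1)) := by omega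
            refine dvd_trans (pow_dvd_pow _ e1) ?_
            rw [pow_add, pow_one]
            exact mul_dvd_mul (hXs i j) (ih (v - s) (by omega) (by omega) x j)
          simp only [Matrix.mulVec, dotProduct]
          exact Finset.dvd_sum fun j _ => hterm j
        · have hxdvd : ∀ j, (p : WittVector p k) ^ ((v - s) / s) ∣ (X ^ (v - s)).mulVec x j :=
            fun j => hdvd_mulVec' _ _ (hpow (v - s)) x j
          have h2 := hpull (X ^ s) m (fun w i' => hbase s hs w i') ((v - s) / s) _ hxdvd i
          refine dvd_trans (pow_dvd_pow _ ?_) h2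
          generalize hg : (v - s) / s = a2 at hdiv ⊢
          omega
  have final : ∀ (E : ℕ → Matrix (Fin n) (Fin n) (WittVector p k)),
      (∀ N, 1 ≤ N → ∀ x i, (p : WittVector p k) ^ m ∣ C x (E N) i) → TendstoV p E Y →
      ∀ x, ∃ y, Y.mulVec (Ψ x) - Ψ (Y.mulVec x) = ((p : WittVector p k) ^ m) • y := by
    intro E hEN hT x
    have hfin : ∀ i, (p : WittVector p k) ^ m ∣ (Y.mulVec (Ψ x) - Ψ (Y.mulVec x)) i := by
      intro i
      obtain ⟨N₀, hN₀⟩ := hT m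
      set N := max N₀ 1 with hN
      have hEw := hN₀ N (le_max_left _ _)
      have hD : ∀ i' j', (p : WittVector p k) ^ m ∣ (E N - Y) i' j' := by
        intro i' j'
        apply wv_pow_dvd_of_coeff_eq_zero
        intro l hl
        have h0 := hEw l hl
        have h1 : (wittPi p l (E N - Y)) i' j' = 0 := by rw [h0]; rfl
        simpa [wittPi, Matrix.map_apply] using h1
      have hCY : C x Y = C x (E N) - C x (E N - Y) := by
        rw [← map_sub, sub_sub_cancel]
      have hgoal : (Y.mulVec (Ψ x) - Ψ (Y.mulVec x)) i = (C x (E N) - C x (E N - Y)) i := by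
        rw [← hCY]; rfl
      rw [hgoal, Pi.sub_apply]
      refine dvd_sub (hEN N (le_max_right _ _) x i) ?_
      have t1 : (p : WittVector p k) ^ m ∣ (E N - Y).mulVec (Ψ x) i := hdvd_mulVec' _ _ hD (Ψ x) i
      have t2 : (p : WittVector p k) ^ m ∣ Ψ ((E N - Y).mulVec x) i := by
        have hDx : ∀ j, (p : WittVector p k) ^ m ∣ (E N - Y).mulVec x j :=
          fun j => hdvd_mulVec' _ _ hD x j
        choose z hz using hDx
        have hzz : (E N - Y).mulVec x = (p : WittVector p k) ^ m • z :=
          funext fun j => by rw [hz j, Pi.smul_apply, smul_eq_mul]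
        rw [hzz, hps]
        exact ⟨Ψ z i, rfl⟩
      simpa [hCapp] using dvd_sub t1 t2
    choose y hy using hfin
    exact ⟨y, funext fun i => by rw [Pi.smul_apply, smul_eq_mul]; exact hy i⟩
  rcases hY with ⟨E, hES, hT⟩ | ⟨E, hES, hT⟩
  · refine final E ?_ hT
    intro N hN x i
    have heq := congrArg (C x) (hES N hN)
    rw [map_nsmul, map_sum] at heq
    simp only [map_nsmul] at heq
    have hsum : (p : WittVector p k) ^ (m + padicValNat p N.factorial) ∣
        ((N.factorial : ℕ) : WittVector p k) * C x (E N) i := by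
      have h1 : (N.factorial • C x (E N)) i = ((N.factorial : ℕ) : WittVector p k) * C x (E N) i := by
        rw [Pi.smul_apply, nsmul_eq_mul]
      rw [← h1, heq, Finset.sum_apply]
      refine Finset.dvd_sum ?_
      intro v hv
      obtain ⟨hv1, hvN⟩ := Finset.mem_Icc.mp hv
      have hdvdf : v.factorial ∣ N.factorial := Nat.factorial_dvd_factorial hvN
      have hq : v.factorial * (N.factorial / v.factorial) = N.factorial := Nat.mul_div_cancel' hdvdf
      have hqz : N.factorial / v.factorial ≠ 0 := by
        intro h0; rw [h0, Nat.mul_zero] at hq; exact Nat.factorial_ne_zero N hq.symm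
      have hAN : padicValNat p N.factorial
          = padicValNat p v.factorial + padicValNat p (N.factorial / v.factorial) := by
        conv_lhs => rw [← hq]
        exact padicValNat.mul (Nat.factorial_ne_zero v) hqz
      have h2 : (p : WittVector p k) ^ (padicValNat p (N.factorial / v.factorial)) ∣
          ((N.factorial / v.factorial : ℕ) : WittVector p k) := by
        simpa using Nat.cast_dvd_cast (α := WittVector p k)
          (pow_padicValNat_dvd (p := p) (n := N.factorial / v.factorial))
      have h3 := hcore v hv1 x i
      rw [Pi.smul_apply, nsmul_eq_mul]
      have e1 : m + padicValNat p N.factorial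
          ≤ padicValNat p (N.factorial / v.factorial) + (m + (v / s - 1)) := by
        have := harith v hv1; omega
      exact dvd_trans (pow_dvd_pow _ e1) (by rw [pow_add]; exact mul_dvd_mul h2 h3)
    exact wv_cancel_factorial m N _ hsum
  · refine final E ?_ hT
    intro N hN x i
    have heq := congrArg (C x) (hES N hN)
    rw [map_zsmul, map_sum] at heq
    simp only [map_zsmul] at heq
    have hsum : (p : WittVector p k) ^ (m + padicValNat p N.factorial) ∣
        ((N.factorial : ℕ) : WittVector p k) * C x (E N) i := by
      have h1 : (((N.factorial : ℤ)) • C x (E N)) i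
          = ((N.factorial : ℕ) : WittVector p k) * C x (E N) i := by
        rw [Pi.smul_apply, zsmul_eq_mul, Int.cast_natCast]
      rw [← h1, heq, Finset.sum_apply]
      refine Finset.dvd_sum ?_
      intro v hv
      obtain ⟨hv1, hvN⟩ := Finset.mem_Icc.mp hv
      have hdvdv : v ∣ N.factorial := Nat.dvd_factorial (by omega) hvN
      have hq : v * (N.factorial / v) = N.factorial := Nat.mul_div_cancel' hdvdv
      have hqz : N.factorial / v ≠ 0 := by
        intro h0; rw [h0, Nat.mul_zero] at hq; exact Nat.factorial_ne_zero N hq.symm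
      have hAN : padicValNat p N.factorial
          = padicValNat p v + padicValNat p (N.factorial / v) := by
        conv_lhs => rw [← hq]
        exact padicValNat.mul (by omega) hqz
      have h2 : (p : WittVector p k) ^ (padicValNat p (N.factorial / v)) ∣
          ((N.factorial / v : ℕ) : WittVector p k) := by
        simpa using Nat.cast_dvd_cast (α := WittVector p k)
          (pow_padicValNat_dvd (p := p) (n := N.factorial / v))
      have h3 := hcore v hv1 x i
      rw [Pi.smul_apply, zsmul_eq_mul]
      have hvv : padicValNat p v ≤ padicValNat p v.factorial := padicValNat_self_le_factorial p hv1
      have e1 : m + padicValNat p N.factorial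
          ≤ padicValNat p (N.factorial / v) + (m + (v / s - 1)) := by
        have := harith v hv1; omega
      refine dvd_trans (pow_dvd_pow _ e1) ?_
      have hcast : (((-1 : ℤ) ^ (v - 1) * ((N.factorial / v : ℕ) : ℤ) : ℤ) : WittVector p k)
          = ((-1 : WittVector p k)) ^ (v - 1) * ((N.factorial / v : ℕ) : WittVector p k) := by
        rw [Int.cast_mul, Int.cast_pow, Int.cast_neg, Int.cast_one, Int.cast_natCast]
      rw [hcast, pow_add]
      calc (p : WittVector p k) ^ (padicValNat p (N.factorial / v)) *
            (p : WittVector p k) ^ (m + (v / s - 1))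
          ∣ ((N.factorial / v : ℕ) : WittVector p k) * C x (X ^ v) i := mul_dvd_mul h2 h3
        _ ∣ (-1 : WittVector p k) ^ (v - 1) *
            (((N.factorial / v : ℕ) : WittVector p k) * C x (X ^ v) i) := dvd_mul_left _ _
        _ = (-1 : WittVector p k) ^ (v - 1) *
            ((N.factorial / v : ℕ) : WittVector p k) * C x (X ^ v) i := by ring
      -- the pow_add split
    exact wv_cancel_factorial m N _ hsum

end Key



/-- Fact B.5-type compatibility: if `X ∈ Σ` almost commutes (mod `p^m`) with a Frobenius-linear
map `Φ` and a Verschiebung-linear map `Θ` on `W(k)^n`, then so do `e₁(X)` and `l₁(X)`. -/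
theorem exp_log_commute_mod_p_pow (p : ℕ) [Fact p.Prime] (k : Type*) [Field k] [CharP k p]
    [PerfectRing k p] (n m : ℕ) (hn : 1 ≤ n) (hm : 1 ≤ m)
    (S : Set (Matrix (Fin n) (Fin n) (WittVector p k))) (hS : IsSigmaEither p S)
    (Φ Θ : (Fin n → WittVector p k) → (Fin n → WittVector p k))
    (hΦadd : ∀ x y, Φ (x + y) = Φ x + Φ y)
    (hΦsemi : ∀ (a : WittVector p k) (x), Φ (a • x) = WittVector.frobenius a • Φ x)
    (hΘadd : ∀ x y, Θ (x + y) = Θ x + Θ y)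
    (hΘsemi : ∀ (a : WittVector p k) (x), Θ (WittVector.frobenius a • x) = a • Θ x)
    (hΦΘ : ∀ x, Φ (Θ x) = (p : WittVector p k) • x)
    (hΘΦ : ∀ x, Θ (Φ x) = (p : WittVector p k) • x)
    (X : Matrix (Fin n) (Fin n) (WittVector p k)) (hX : X ∈ S)
    (hXΦ : ∀ x, ∃ y, X.mulVec (Φ x) - Φ (X.mulVec x) = ((p : WittVector p k) ^ m) • y)
    (hXΘ : ∀ x, ∃ y, X.mulVec (Θ x) - Θ (X.mulVec x) = ((p : WittVector p k) ^ m) • y) :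
    (∀ Y, IsExpLimit p X Y →
      (∀ x, ∃ y, Y.mulVec (Φ x) - Φ (Y.mulVec x) = ((p : WittVector p k) ^ m) • y) ∧
      (∀ x, ∃ y, Y.mulVec (Θ x) - Θ (Y.mulVec x) = ((p : WittVector p k) ^ m) • y)) ∧
    (∀ Y, IsLogLimit p X Y →
      (∀ x, ∃ y, Y.mulVec (Φ x) - Φ (Y.mulVec x) = ((p : WittVector p k) ^ m) • y) ∧
      (∀ x, ∃ y, Y.mulVec (Θ x) - Θ (Y.mulVec x) = ((p : WittVector p k) ^ m) • y)) := by
  classical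
  have hpsΦ : ∀ (c : ℕ) (x), Φ ((p : WittVector p k) ^ c • x)
      = (p : WittVector p k) ^ c • Φ x := by
    intro c x
    rw [hΦsemi]
    congr 1
    rw [map_pow, map_natCast]
  have hpsΘ : ∀ (c : ℕ) (x), Θ ((p : WittVector p k) ^ c • x)
      = (p : WittVector p k) ^ c • Θ x := by
    intro c x
    have h1 : ((p : WittVector p k) ^ c) = WittVector.frobenius ((p : WittVector p k) ^ c) := by
      rw [map_pow, map_natCast]
    calc Θ ((p : WittVector p k) ^ c • x)
        = Θ (WittVector.frobenius ((p : WittVector p k) ^ c) • x) := by rw [← h1]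
      _ = (p : WittVector p k) ^ c • Θ x := hΘsemi _ x
  have hcommΦ : ∀ x i, (p : WittVector p k) ^ m ∣ (X.mulVec (Φ x) - Φ (X.mulVec x)) i := by
    intro x i
    obtain ⟨y, hy⟩ := hXΦ x
    exact ⟨y i, by rw [congrFun hy i, Pi.smul_apply, smul_eq_mul]⟩
  have hcommΘ : ∀ x i, (p : WittVector p k) ^ m ∣ (X.mulVec (Θ x) - Θ (X.mulVec x)) i := by
    intro x i
    obtain ⟨y, hy⟩ := hXΘ x
    exact ⟨y i, by rw [congrFun hy i, Pi.smul_apply, smul_eq_mul]⟩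
  have hwp : ∀ (M : Matrix (Fin n) (Fin n) (WittVector p k)),
      wittPi p 0 M = (WittVector.constantCoeff.mapMatrix :
        Matrix (Fin n) (Fin n) (WittVector p k) →+* Matrix (Fin n) (Fin n) k) M :=
    fun M => rfl
  obtain ⟨s, hs1, hXs, harith⟩ :
      ∃ s, 1 ≤ s ∧ (∀ i j, (p : WittVector p k) ∣ (X ^ s) i j) ∧
        (∀ v, 1 ≤ v → padicValNat p v.factorial ≤ v / s - 1) := by
    rcases hS with ⟨s, hodd, hs1, hs2, rfl⟩ | ⟨t, ht, rfl⟩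
    · have hX' : wittPi p 0 X ^ s = 0 := hX
      refine ⟨s, hs1, ?_, ?_⟩
      · have hmap : wittPi p 0 (X ^ s) = 0 := by
          rw [hwp, map_pow, ← hwp, hX']
        intro i j
        have h0 : ((X ^ s) i j).coeff 0 = 0 := by
          have h1 := congrFun (congrFun hmap i) j
          simpa [wittPi, Matrix.map_apply] using h1
        simpa using wv_pow_dvd_of_coeff_eq_zero 1 ((X ^ s) i j)
          (fun l hl => by rw [Nat.lt_one_iff.mp hl]; exact h0)
      · have hp3 : 3 ≤ p := by
          rcases hodd with ⟨r, hr⟩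
          have := (Fact.out : p.Prime).two_le
          omega
        have h2s : 2 * s ≤ p - 1 := by
          rcases hodd with ⟨r, hr⟩
          omega
        exact harith_sigma_s p hs1 h2s
    · have hX' : wittPi p 0 X = 0 := hX.1
      refine ⟨1, le_refl 1, ?_, harith_one p⟩
      intro i j
      have h0 : (X i j).coeff 0 = 0 := by
        have h1 := congrFun (congrFun hX' i) j
        simpa [wittPi, Matrix.map_apply] using h1
      rw [pow_one]
      simpa using wv_pow_dvd_of_coeff_eq_zero 1 (X i j)
        (fun l hl => by rw [Nat.lt_one_iff.mp hl]; exact h0)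
  constructor
  · intro Y hY
    exact ⟨key_commute p k m s hs1 X hXs harith Φ hΦadd hpsΦ hcommΦ Y (Or.inl hY),
      key_commute p k m s hs1 X hXs harith Θ hΘadd hpsΘ hcommΘ Y (Or.inl hY)⟩
  · intro Y hY
    exact ⟨key_commute p k m s hs1 X hXs harith Φ hΦadd hpsΦ hcommΦ Y (Or.inr hY),
      key_commute p k m s hs1 X hXs harith Θ hΘadd hpsΘ hcommΘ Y (Or.inr hY)⟩
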